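/- Let p, n, m be integers with n ≥ m ≥ 0 and p ≥ n + 2m + 2, and let (B, R) be a partition of the edges of K_p. Then (B,R) is (n,m)-free if and only if for every color C ∈ {B,R} and every edge uv ∈ C, either |N_C(u) ∪ N_C(v)| ≤ n + m + 1, or both deg_C(u) ≤ n and deg_C(v) ≤ n. -/

import Mathlib

open SimpleGraph Set

/-- `G` contains a copy of the double star `S(n,m)`. -/
def HasDoubleStar {V : Type*} (G : SimpleGraph V) (n m : ℕ) : Prop :=
  ∃ (u v : V) (A B : Finset V), G.Adj u v ∧
    ↑A ⊆ G.neighborSet u ∧ ↑B ⊆ G.neighborSet v ∧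
    v ∉ A ∧ u ∉ B ∧ Disjoint A B ∧ A.card = n ∧ B.card = m

/-- Ramsey number of the double star `S(n,m)`. -/
noncomputable def doubleStarRamsey (n m : ℕ) : ℕ :=
  sInf {N : ℕ | ∀ G : SimpleGraph (Fin N), HasDoubleStar G n m ∨ HasDoubleStar Gᶜ n m}

/-- `G` is a `(δ,η)`-graph. -/
def IsDEGraph {V : Type*} [Fintype V] (δ η : ℝ) (G : SimpleGraph V) : Prop :=
  1 < Fintype.card V ∧
  (∀ v : V, ((G.neighborSet v).ncard : ℝ) + 1 ≥ δ * Fintype.card V) ∧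
  (∀ u v : V, G.Adj u v →
    ((G.neighborSet u ∪ G.neighborSet v).ncard : ℝ) ≤ (1 - η) * Fintype.card V)

lemma finset_pick {V : Type*} [DecidableEq V] (X Y : Finset V) (n m : ℕ)
    (hX : n ≤ X.card) (hY : m ≤ Y.card) (hXY : n + m ≤ (X ∪ Y).card) :
    ∃ A B : Finset V, A ⊆ X ∧ B ⊆ Y ∧ Disjoint A B ∧ A.card = n ∧ B.card = m := by
  by_cases hD : n ≤ (X \ Y).card
  · obtain ⟨A, hAX, hA⟩ := Finset.exists_subset_card_eq hD
    obtain ⟨B, hBY, hB⟩ := Finset.exists_subset_card_eq hY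
    refine ⟨A, B, hAX.trans (Finset.sdiff_subset), hBY, ?_, hA, hB⟩
    exact Finset.disjoint_left.2 fun a ha hb =>
      (Finset.mem_sdiff.1 (hAX ha)).2 (hBY hb)
  · push_neg at hD
    obtain ⟨A, hDA, hAX, hA⟩ := Finset.exists_subsuperset_card_eq (n := n - (X \ Y).card + (X \ Y).card)
      (Finset.sdiff_subset : X \ Y ⊆ X) (by omega) (by omega)
    rw [Nat.sub_add_cancel hD.le] at hA
    have h1 : Y ∩ A ⊆ A \ (X \ Y) := by
      intro a ha
      rw [Finset.mem_sdiff]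
      refine ⟨(Finset.mem_inter.1 ha).2, fun h => (Finset.mem_sdiff.1 h).2 (Finset.mem_inter.1 ha).1⟩
    have h2 : (A \ (X \ Y)).card = n - (X \ Y).card := by
      rw [Finset.card_sdiff_of_subset hDA, hA]
    have h3 : (X ∪ Y).card ≤ (X \ Y).card + Y.card := by
      calc (X ∪ Y).card = (Y ∪ X \ Y).card := by
            rw [Finset.union_sdiff_self_eq_union, Finset.union_comm]
        _ ≤ Y.card + (X \ Y).card := Finset.card_union_le _ _
        _ = (X \ Y).card + Y.card := Nat.add_comm _ _
    have h4 : m ≤ (Y \ A).card := by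
      have h6 := Finset.card_le_card h1
      have h5 := Finset.card_sdiff_add_card_inter Y A
      omega
    obtain ⟨B, hBY, hB⟩ := Finset.exists_subset_card_eq h4
    refine ⟨A, B, hAX, hBY.trans (Finset.sdiff_subset), ?_, hA, hB⟩
    exact Finset.disjoint_left.2 fun a ha hb => (Finset.mem_sdiff.1 (hBY hb)).2 ha

lemma hasDoubleStar_of {p n m : ℕ} (H : SimpleGraph (Fin p)) (u v : Fin p) (h : H.Adj u v)
    (hu : n + 1 ≤ (H.neighborSet u).ncard) (hv : m + 1 ≤ (H.neighborSet v).ncard)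
    (hun : n + m + 2 ≤ ((H.neighborSet u ∪ H.neighborSet v)).ncard) :
    HasDoubleStar H n m := by
  classical
  set NU := (H.neighborSet u).toFinite.toFinset with hNU
  set NV := (H.neighborSet v).toFinite.toFinset with hNV
  have hcNU : (↑NU : Set (Fin p)) = H.neighborSet u := Set.Finite.coe_toFinset _
  have hcNV : (↑NV : Set (Fin p)) = H.neighborSet v := Set.Finite.coe_toFinset _
  have hNUc : NU.card = (H.neighborSet u).ncard := by
    rw [← hcNU, Set.ncard_coe_finset]
  have hNVc : NV.card = (H.neighborSet v).ncard := by
    rw [← hcNV, Set.ncard_coe_finset]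
  have hvNU : v ∈ NU := by rw [Set.Finite.mem_toFinset]; exact h
  have huNV : u ∈ NV := by rw [Set.Finite.mem_toFinset]; exact h.symm
  have huNU : u ∉ NU := by rw [Set.Finite.mem_toFinset]; exact H.notMem_neighborSet_self
  have hvNV : v ∉ NV := by rw [Set.Finite.mem_toFinset]; exact H.notMem_neighborSet_self
  set X := NU.erase v with hX
  set Y := NV.erase u with hY
  have hXc : n ≤ X.card := by
    rw [hX, Finset.card_erase_of_mem hvNU]; omega
  have hYc : m ≤ Y.card := by
    rw [hY, Finset.card_erase_of_mem huNV]; omega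
  have hWc : (NU ∪ NV).card = (H.neighborSet u ∪ H.neighborSet v).ncard := by
    rw [← Set.ncard_coe_finset, Finset.coe_union, hcNU, hcNV]
  have hXY : X ∪ Y = (NU ∪ NV) \ {u, v} := by
    ext a
    simp only [hX, hY, Finset.mem_union, Finset.mem_erase, Finset.mem_sdiff,
      Finset.mem_insert, Finset.mem_singleton]
    constructor
    · rintro (⟨hav, ha⟩ | ⟨hau, ha⟩)
      · exact ⟨Or.inl ha, fun hc => hc.elim (fun e => huNU (e ▸ ha)) hav⟩
      · exact ⟨Or.inr ha, fun hc => hc.elim hau (fun e => hvNV (e ▸ ha))⟩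
    · rintro ⟨ha | ha, hne⟩
      · exact Or.inl ⟨fun e => hne (Or.inr e), ha⟩
      · exact Or.inr ⟨fun e => hne (Or.inl e), ha⟩
  have hsub : ({u, v} : Finset (Fin p)) ⊆ NU ∪ NV := by
    intro a ha
    rcases Finset.mem_insert.1 ha with rfl | ha
    · exact Finset.mem_union.2 (Or.inr huNV)
    · rw [Finset.mem_singleton] at ha; subst ha
      exact Finset.mem_union.2 (Or.inl hvNU)
  have hcard2 : ({u, v} : Finset (Fin p)).card = 2 := by
    rw [Finset.card_insert_of_notMem (by simp [h.ne]), Finset.card_singleton]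
  have hXYc : n + m ≤ (X ∪ Y).card := by
    rw [hXY, Finset.card_sdiff_of_subset hsub, hcard2, hWc]; omega
  obtain ⟨A, B, hAX, hBY, hdisj, hA, hB⟩ := finset_pick X Y n m hXc hYc hXYc
  refine ⟨u, v, A, B, h, ?_, ?_, ?_, ?_, hdisj, hA, hB⟩
  · intro a ha
    rw [← hcNU]
    exact Finset.mem_coe.2 (Finset.erase_subset _ _ (hAX (Finset.mem_coe.1 ha)))
  · intro a ha
    rw [← hcNV]
    exact Finset.mem_coe.2 (Finset.erase_subset _ _ (hBY (Finset.mem_coe.1 ha)))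
  · exact fun hc => (Finset.mem_erase.1 (hAX hc)).1 rfl
  · exact fun hc => (Finset.mem_erase.1 (hBY hc)).1 rfl

lemma star_bounds {p n m : ℕ} (H : SimpleGraph (Fin p)) (h : HasDoubleStar H n m) :
    ∃ u v : Fin p, H.Adj u v ∧ n + 1 ≤ (H.neighborSet u).ncard ∧
      n + m + 2 ≤ (H.neighborSet u ∪ H.neighborSet v).ncard := by
  classical
  obtain ⟨u, v, A, B, hadj, hAu, hBv, hvA, huB, hdisj, hA, hB⟩ := h
  have huA : u ∉ A := fun hc => H.irrefl (hAu hc)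
  have hvB : v ∉ B := fun hc => H.irrefl (hBv hc)
  refine ⟨u, v, hadj, ?_, ?_⟩
  · have hsub : (↑(insert v A) : Set (Fin p)) ⊆ H.neighborSet u := by
      intro a ha
      rcases Finset.mem_insert.1 (Finset.mem_coe.1 ha) with rfl | ha
      · exact hadj
      · exact hAu (Finset.mem_coe.2 ha)
    have := Set.ncard_le_ncard hsub (Set.toFinite _)
    rwa [Set.ncard_coe_finset, Finset.card_insert_of_notMem hvA, hA] at this
  · set S : Finset (Fin p) := insert u (insert v (A ∪ B)) with hS
    have hsub : (↑S : Set (Fin p)) ⊆ H.neighborSet u ∪ H.neighborSet v := by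
      intro a ha
      simp only [hS, Finset.coe_insert, Set.mem_insert_iff, Finset.coe_union,
        Set.mem_union, Finset.mem_coe] at ha
      rcases ha with rfl | rfl | ha | ha
      · exact Or.inr hadj.symm
      · exact Or.inl hadj
      · exact Or.inl (hAu ha)
      · exact Or.inr (hBv ha)
    have hcard : S.card = n + m + 2 := by
      rw [hS, Finset.card_insert_of_notMem (by
          simp only [Finset.mem_insert, Finset.mem_union]
          push_neg
          exact ⟨hadj.ne, huA, huB⟩),
        Finset.card_insert_of_notMem (by
          simp only [Finset.mem_union]
          push_neg
          exact ⟨hvA, hvB⟩),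
        Finset.card_union_of_disjoint hdisj, hA, hB]
    have := Set.ncard_le_ncard hsub (Set.toFinite _)
    rwa [Set.ncard_coe_finset, hcard] at this

lemma deg_add {p : ℕ} (G : SimpleGraph (Fin p)) (v : Fin p) :
    (G.neighborSet v).ncard + (Gᶜ.neighborSet v).ncard = p - 1 := by
  have hdisj : Disjoint (G.neighborSet v) (Gᶜ.neighborSet v) := by
    rw [Set.disjoint_left]
    intro a ha hb
    exact ((G.compl_adj v a).1 hb).2 ha
  have hU : G.neighborSet v ∪ Gᶜ.neighborSet v = {v}ᶜ := by
    ext a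
    simp only [Set.mem_union, mem_neighborSet, compl_adj, Set.mem_compl_iff,
      Set.mem_singleton_iff]
    constructor
    · rintro (h | ⟨h, -⟩)
      · exact fun e => G.irrefl (e ▸ h)
      · exact fun e => h e.symm
    · intro h
      by_cases hadj : G.Adj v a
      · exact Or.inl hadj
      · exact Or.inr ⟨fun e => h e.symm, hadj⟩
  have := Set.ncard_union_eq hdisj (Set.toFinite _) (Set.toFinite _)
  rw [hU] at this
  rw [← this]
  have : ({v}ᶜ : Set (Fin p)) = Set.univ \ {v} := by
    rw [Set.compl_eq_univ_diff]
  rw [this, Set.ncard_diff (Set.subset_univ _), Set.ncard_univ, Set.ncard_singleton,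
    Nat.card_eq_fintype_card, Fintype.card_fin]

lemma lemA {p n m : ℕ} (H : SimpleGraph (Fin p)) (hfree : ¬ HasDoubleStar H n m)
    (v w : Fin p) (hadj : H.Adj v w) (hv : n + m + 1 ≤ (H.neighborSet v).ncard) :
    (H.neighborSet w).ncard ≤ m := by
  by_contra hw
  push_neg at hw
  apply hfree
  apply hasDoubleStar_of H v w hadj (by omega) (by omega)
  have h1 : insert v (H.neighborSet v) ⊆ H.neighborSet v ∪ H.neighborSet w := by
    intro a ha
    rcases Set.mem_insert_iff.1 ha with rfl | ha
    · exact Or.inr hadj.symm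
    · exact Or.inl ha
  have h2 := Set.ncard_le_ncard h1 (Set.toFinite _)
  rw [Set.ncard_insert_of_notMem (H.notMem_neighborSet_self)] at h2
  omega

lemma lemB' {p n m : ℕ} (hnm : m ≤ n) (hp : n + 2*m + 2 ≤ p) (H : SimpleGraph (Fin p))
    (h1 : ¬HasDoubleStar H n m) (h2 : ¬HasDoubleStar Hᶜ n m) (v : Fin p) :
    (H.neighborSet v).ncard ≤ n + m := by
  by_contra hv
  push_neg at hv
  replace hv : n + m + 1 ≤ (H.neighborSet v).ncard := hv
  have hA : ∀ w ∈ H.neighborSet v, (H.neighborSet w).ncard ≤ m :=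
    fun w hw => lemA H h1 v w hw hv
  obtain ⟨w, hw⟩ : (H.neighborSet v).Nonempty :=
    Set.nonempty_of_ncard_ne_zero (by omega)
  have hw2 : (H.neighborSet w).ncard ≤ m := hA w hw
  have hdw := deg_add H w
  have hwc : n + m + 1 ≤ (Hᶜ.neighborSet w).ncard := by omega
  have hsub : insert v (H.neighborSet v \ {w}) ⊆ H.neighborSet w := by
    intro a ha
    rcases Set.mem_insert_iff.1 ha with rfl | ⟨haN, haw⟩
    · exact Adj.symm hw
    · by_contra hna
      have hne : w ≠ a := fun e => haw (Set.mem_singleton_iff.2 e.symm)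
      have hcadj : Hᶜ.Adj w a := (H.compl_adj w a).2 ⟨hne, hna⟩
      have := lemA Hᶜ h2 w a hcadj hwc
      have h3 := hA a haN
      have hda := deg_add H a
      omega
  have hcard : (insert v (H.neighborSet v \ {w})).ncard
      = (H.neighborSet v \ {w}).ncard + 1 := by
    apply Set.ncard_insert_of_notMem
    · intro hc
      exact H.notMem_neighborSet_self (Set.mem_of_mem_diff hc)
    · exact (Set.toFinite _).diff
  have hd : (H.neighborSet v \ {w}).ncard = (H.neighborSet v).ncard - 1 := by
    rw [Set.ncard_diff (by simpa using hw) (Set.toFinite _), Set.ncard_singleton]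
  have := Set.ncard_le_ncard hsub (Set.toFinite _)
  omega

theorem free_iff_degree_conditions (p n m : ℕ) (hnm : m ≤ n) (hp : n + 2*m + 2 ≤ p)
    (G : SimpleGraph (Fin p)) :
    (¬ HasDoubleStar G n m ∧ ¬ HasDoubleStar Gᶜ n m) ↔
    (∀ C ∈ ({G, Gᶜ} : Set (SimpleGraph (Fin p))), ∀ u v : Fin p, C.Adj u v →
      ((C.neighborSet u ∪ C.neighborSet v).ncard ≤ n + m + 1 ∨
        ((C.neighborSet u).ncard ≤ n ∧ (C.neighborSet v).ncard ≤ n))) := by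
  constructor
  · rintro ⟨hG, hGc⟩ C hC u v hadj
    have hfree : ¬HasDoubleStar C n m ∧ ¬HasDoubleStar Cᶜ n m := by
      rcases hC with rfl | hC
      · exact ⟨hG, hGc⟩
      · rw [Set.mem_singleton_iff] at hC
        subst hC
        exact ⟨hGc, by rwa [compl_compl]⟩
    obtain ⟨h1, h2⟩ := hfree
    by_cases hun : (C.neighborSet u ∪ C.neighborSet v).ncard ≤ n + m + 1
    · exact Or.inl hun
    push_neg at hun
    replace hun : n + m + 2 ≤ (C.neighborSet u ∪ C.neighborSet v).ncard := hun
    right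
    have key : ∀ x y : Fin p, C.Adj x y →
        n + m + 2 ≤ (C.neighborSet x ∪ C.neighborSet y).ncard →
        (C.neighborSet x).ncard ≤ n := by
      intro x y hxy hu2
      by_contra hx
      push_neg at hx
      have hy : (C.neighborSet y).ncard ≤ m := by
        by_contra hy
        push_neg at hy
        exact h1 (hasDoubleStar_of C x y hxy (by omega) (by omega) hu2)
      have hdy := deg_add C y
      have hyc : n + m + 1 ≤ (Cᶜ.neighborSet y).ncard := by omega
      have := lemB' hnm hp Cᶜ h2 (by rwa [compl_compl]) y
      omega
    refine ⟨key u v hadj hun, key v u hadj.symm ?_⟩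
    rwa [Set.union_comm]
  · intro hcond
    constructor
    · intro hstar
      obtain ⟨u, v, hadj, hu, hun⟩ := star_bounds G hstar
      rcases hcond G (Or.inl rfl) u v hadj with h | h
      · omega
      · omega
    · intro hstar
      obtain ⟨u, v, hadj, hu, hun⟩ := star_bounds Gᶜ hstar
      rcases hcond Gᶜ (Or.inr rfl) u v hadj with h | h
      · omega
      · omega
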